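/- If H₁, H₂, H₃ are spatial hybrid numbers with coordinates (bₖ, cₖ, dₖ) for k = 1,2,3, and g(H₁, H₂) = 0, then g(H₁H₂, H₃) equals the determinant of the 3×3 matrix with rows (b₁,c₁,d₁), (b₂,c₂,d₂), (b₃,c₃,d₃). -/
import Mathlib


open Real Matrix

noncomputable section

/-- Scalar product on the spatial hybrid number space, coordinates (b,c,d). -/
def g (x y : Fin 3 → ℝ) : ℝ := x 0 * y 0 - x 0 * y 1 - y 0 * x 1 - x 2 * y 2

/-- Hybridian product of g-orthogonal spatial hybrid numbers. -/
def hprod (x y : Fin 3 → ℝ) : Fin 3 → ℝ :=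
  ![x 0 * y 2 - y 0 * x 2, x 0 * y 2 - y 0 * x 2 - x 1 * y 2 + y 1 * x 2,
    y 0 * x 1 - x 0 * y 1]

/-- Gram matrix of g. -/
def Gmat : Matrix (Fin 3) (Fin 3) ℝ := !![1, -1, 0; -1, 0, 0; 0, 0, -1]

/-- If g(H₁,H₂) = 0, then g(H₁H₂, H₃) is the determinant of the matrix with
rows the coordinates of H₁, H₂, H₃. -/
theorem stmt1 (H₁ H₂ H₃ : Fin 3 → ℝ) (h : g H₁ H₂ = 0) :
    g (hprod H₁ H₂) H₃ = (Matrix.of ![H₁, H₂, H₃]).det := by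
  simp only [g, hprod, Matrix.det_fin_three, Matrix.of_apply]
  simp only [Matrix.cons_val', Matrix.cons_val_zero, Matrix.cons_val_one, Matrix.head_cons,
    Matrix.empty_val', Matrix.cons_val_fin_one, Matrix.head_fin_const, Matrix.cons_val_two,
    Matrix.tail_cons]
  nlinarith [h, sq_nonneg (H₁ 0)]
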